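/- Let 0 ≤ p, q, r ≤ N and 0 ≤ j ≤ N. If p + q > j, then f_{pqr}^{(j)} = − Σ_{((i_1,…,i_l),(d_1,…,d_l)) ∈ Λ_r^j} ((n+1)!/(d_1!⋯d_l!)) · z_{i_1}^{d_1} ⋯ z_{i_l}^{d_l} (the empty sum being 0). -/

import Mathlib

noncomputable section

open MvPolynomial

/-- `R N = ℂ[x_0,…,x_N, y_0,…,y_N, z_0,…,z_N]`. -/
abbrev R (N : ℕ) : Type := MvPolynomial (Fin 3 × Fin (N + 1)) ℂ

/-- the variable `x_i` (for `i ≤ N`). -/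
def Xv (N i : ℕ) : R N := if h : i < N + 1 then X (0, ⟨i, h⟩) else 0
/-- the variable `y_i` (for `i ≤ N`). -/
def Yv (N i : ℕ) : R N := if h : i < N + 1 then X (1, ⟨i, h⟩) else 0
/-- the variable `z_i` (for `i ≤ N`). -/
def Zv (N i : ℕ) : R N := if h : i < N + 1 then X (2, ⟨i, h⟩) else 0

/-- `Σ_{i=p}^N x_i t^i`. -/
def xSer (N p : ℕ) : Polynomial (R N) :=
  ∑ i ∈ Finset.Icc p N, Polynomial.C (Xv N i) * Polynomial.X ^ i
/-- `Σ_{i=q}^N y_i t^i`. -/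
def ySer (N q : ℕ) : Polynomial (R N) :=
  ∑ i ∈ Finset.Icc q N, Polynomial.C (Yv N i) * Polynomial.X ^ i
/-- `Σ_{i=r}^N z_i t^i`. -/
def zSer (N r : ℕ) : Polynomial (R N) :=
  ∑ i ∈ Finset.Icc r N, Polynomial.C (Zv N i) * Polynomial.X ^ i

/-- `f_{pqr}^{(j)}`: the coefficient of `t^j` in
`f(Σ_{i=p}^N x_i t^i, Σ_{i=q}^N y_i t^i, Σ_{i=r}^N z_i t^i)` where `f = xy - z^{n+1}`. -/
def fpqr (N n p q r j : ℕ) : R N :=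
  (xSer N p * ySer N q - zSer N r ^ (n + 1)).coeff j

/-- `Λ_{pq}^j = {(l₁,l₂) ∈ ℤ_{≥0}² : l₁ ≥ p, l₂ ≥ q, l₁+l₂ = j}`. -/
def LamPQ (p q j : ℕ) : Finset (ℕ × ℕ) :=
  (Finset.HasAntidiagonal.antidiagonal j).filter fun l => p ≤ l.1 ∧ q ≤ l.2

/-- `Λ_r^j`, encoded as the set of finitely supported functions `d : ℕ →₀ ℕ`
(recording the multiplicity `d_k` of each index `i_k` of the strictly increasing
sequence `r ≤ i_1 < ⋯ < i_l ≤ j`, so `l ≥ 1` and `d > 0` on the support) with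
`Σ d_i = n+1` and `Σ i·d_i = j`. -/
def LamR (n r j : ℕ) : Finset (ℕ →₀ ℕ) :=
  (Finset.finsuppAntidiag (Finset.Icc r j) (n + 1)).filter
    fun d => ∑ i ∈ d.support, i * d i = j

/-- the monomial term `((n+1)!/(d_1!⋯d_l!)) · z_{i_1}^{d_1} ⋯ z_{i_l}^{d_l}`. -/
def zTerm (N : ℕ) (d : ℕ →₀ ℕ) : R N :=
  (Nat.multinomial d.support d : R N) * ∏ i ∈ d.support, Zv N i ^ d i


-- Auxiliary lemmas for stmt2

lemma multinomial_subset' {s t : Finset ℕ} {f : ℕ → ℕ} (hts : t ⊆ s)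
    (hf : ∀ i ∈ s, i ∉ t → f i = 0) :
    Nat.multinomial s f = Nat.multinomial t f := by
  unfold Nat.multinomial
  rw [Finset.sum_subset hts hf, Finset.prod_subset hts (fun i hi hit => by
    rw [hf i hi hit]; rfl)]

lemma xy_coeff_zero' (N p q j : ℕ) (h : p + q > j) :
    (xSer N p * ySer N q).coeff j = 0 := by
  rw [xSer, ySer, Finset.sum_mul_sum]
  rw [Polynomial.finset_sum_coeff]
  apply Finset.sum_eq_zero
  intro i hi
  rw [Polynomial.finset_sum_coeff]
  apply Finset.sum_eq_zero
  intro i' hi'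
  have : Polynomial.C (Xv N i) * Polynomial.X ^ i * (Polynomial.C (Yv N i') * Polynomial.X ^ i')
      = Polynomial.C (Xv N i * Yv N i') * Polynomial.X ^ (i + i') := by
    rw [map_mul, pow_add]; ring
  rw [this, Polynomial.coeff_C_mul, Polynomial.coeff_X_pow, if_neg, mul_zero]
  have : p ≤ i := (Finset.mem_Icc.mp hi).1
  have : q ≤ i' := (Finset.mem_Icc.mp hi').1
  omega

lemma bij_sum' (N n r j : ℕ) (hj : j ≤ N) :
    ∑ k ∈ (Finset.piAntidiag (Finset.Icc r N) (n + 1)).filter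
        (fun k => ∑ i ∈ Finset.Icc r N, i * k i = j),
      ((Nat.multinomial (Finset.Icc r N) k : R N) * ∏ i ∈ Finset.Icc r N, Zv N i ^ k i)
    = ∑ d ∈ LamR n r j, zTerm N d := by
  have hsub : Finset.Icc r j ⊆ Finset.Icc r N := Finset.Icc_subset_Icc_right hj
  refine Finset.sum_bij'
    (fun k hk => Finsupp.onFinset (Finset.Icc r N) k
      (fun i hi => (Finset.mem_piAntidiag.mp (Finset.mem_filter.mp hk).1).2 i hi))
    (fun d _ => ⇑d) ?_ ?_ ?_ ?_ ?_
  · -- hi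
    intro k hk
    rw [Finset.mem_filter, Finset.mem_piAntidiag] at hk
    obtain ⟨⟨hsum, hmem⟩, hw⟩ := hk
    set d : ℕ →₀ ℕ := Finsupp.onFinset (Finset.Icc r N) k (fun i hi => hmem i hi) with hd
    have hsupp : d.support ⊆ Finset.Icc r j := by
      intro i hi
      have hi' : k i ≠ 0 := Finsupp.mem_support_iff.mp hi
      have h1 := hmem i hi'
      rw [Finset.mem_Icc] at h1 ⊢
      refine ⟨h1.1, ?_⟩
      have hle : i * k i ≤ ∑ i' ∈ Finset.Icc r N, i' * k i' :=
        Finset.single_le_sum (f := fun i' => i' * k i')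
          (fun i' _ => Nat.zero_le _) (Finset.mem_Icc.mpr h1)
      have hki : 1 ≤ k i := Nat.one_le_iff_ne_zero.mpr hi'
      calc i = i * 1 := (mul_one i).symm
        _ ≤ i * k i := Nat.mul_le_mul_left i hki
        _ ≤ _ := hle
        _ = j := hw
    have hsuppN : d.support ⊆ Finset.Icc r N := hsupp.trans hsub
    have hzN : ∀ i ∈ Finset.Icc r N, i ∉ d.support → k i = 0 :=
      fun i _ hi => Finsupp.notMem_support_iff.mp hi
    have hzj : ∀ i ∈ Finset.Icc r j, i ∉ d.support → k i = 0 :=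
      fun i _ hi => Finsupp.notMem_support_iff.mp hi
    rw [LamR, Finset.mem_filter, Finset.mem_finsuppAntidiag]
    refine ⟨⟨?_, hsupp⟩, ?_⟩
    · show ∑ i ∈ Finset.Icc r j, k i = n + 1
      calc ∑ i ∈ Finset.Icc r j, k i = ∑ i ∈ d.support, k i :=
            (Finset.sum_subset hsupp hzj).symm
        _ = ∑ i ∈ Finset.Icc r N, k i := Finset.sum_subset hsuppN hzN
        _ = n + 1 := hsum
    · show ∑ i ∈ d.support, i * k i = j
      calc ∑ i ∈ d.support, i * k i = ∑ i ∈ Finset.Icc r N, i * k i :=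
            Finset.sum_subset hsuppN (fun i hi hni => by rw [hzN i hi hni, mul_zero])
        _ = j := hw
  · -- hj
    intro d hd
    rw [LamR, Finset.mem_filter, Finset.mem_finsuppAntidiag] at hd
    obtain ⟨⟨hsum, hsupp⟩, hw⟩ := hd
    have hsuppN : d.support ⊆ Finset.Icc r N := hsupp.trans hsub
    rw [Finset.mem_filter, Finset.mem_piAntidiag]
    refine ⟨⟨?_, fun i hi => hsuppN (Finsupp.mem_support_iff.mpr hi)⟩, ?_⟩
    · calc ∑ i ∈ Finset.Icc r N, d i = ∑ i ∈ d.support, d i :=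
            (Finset.sum_subset hsuppN (fun i _ hni => Finsupp.notMem_support_iff.mp hni)).symm
        _ = ∑ i ∈ Finset.Icc r j, d i :=
            Finset.sum_subset hsupp (fun i _ hni => Finsupp.notMem_support_iff.mp hni)
        _ = n + 1 := hsum
    · calc ∑ i ∈ Finset.Icc r N, i * d i = ∑ i ∈ d.support, i * d i :=
            (Finset.sum_subset hsuppN (fun i _ hni => by
              rw [Finsupp.notMem_support_iff.mp hni, mul_zero])).symm
        _ = j := hw
  · intro k hk; rfl
  · intro d hd; exact Finsupp.ext fun _ => rfl
  · -- values agree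
    intro k hk
    rw [Finset.mem_filter, Finset.mem_piAntidiag] at hk
    obtain ⟨⟨hsum, hmem⟩, hw⟩ := hk
    set d : ℕ →₀ ℕ := Finsupp.onFinset (Finset.Icc r N) k (fun i hi => hmem i hi) with hd
    have hsuppN : d.support ⊆ Finset.Icc r N :=
      fun i hi => hmem i (Finsupp.mem_support_iff.mp hi)
    have hzN : ∀ i ∈ Finset.Icc r N, i ∉ d.support → k i = 0 :=
      fun i _ hi => Finsupp.notMem_support_iff.mp hi
    show _ = zTerm N d
    rw [zTerm]
    congr 1
    · exact_mod_cast congrArg (Nat.cast : ℕ → R N) (multinomial_subset' hsuppN hzN)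
    · exact (Finset.prod_subset hsuppN (fun i hi hni => by
        rw [hzN i hi hni, pow_zero])).symm

lemma z_coeff' (N n r j : ℕ) (hj : j ≤ N) :
    (zSer N r ^ (n + 1)).coeff j = ∑ d ∈ LamR n r j, zTerm N d := by
  rw [zSer, Finset.sum_pow_eq_sum_piAntidiag]
  rw [Polynomial.finset_sum_coeff]
  have key : ∀ k ∈ Finset.piAntidiag (Finset.Icc r N) (n + 1),
      (((Nat.multinomial (Finset.Icc r N) k : Polynomial (R N)) *
        ∏ i ∈ Finset.Icc r N, (Polynomial.C (Zv N i) * Polynomial.X ^ i) ^ k i).coeff j)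
      = if (∑ i ∈ Finset.Icc r N, i * k i) = j then
          (Nat.multinomial (Finset.Icc r N) k : R N) * ∏ i ∈ Finset.Icc r N, Zv N i ^ k i
        else 0 := by
    intro k hk
    have hprod : ∏ i ∈ Finset.Icc r N, (Polynomial.C (Zv N i) * Polynomial.X ^ i) ^ k i
        = Polynomial.C (∏ i ∈ Finset.Icc r N, Zv N i ^ k i) *
          Polynomial.X ^ (∑ i ∈ Finset.Icc r N, i * k i) := by
      rw [map_prod, ← Finset.prod_pow_eq_pow_sum, ← Finset.prod_mul_distrib]
      apply Finset.prod_congr rfl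
      intro i _
      rw [mul_pow, ← pow_mul, ← map_pow, mul_comm i (k i)]
    rw [hprod, ← mul_assoc]
    rw [show (Nat.multinomial (Finset.Icc r N) k : Polynomial (R N)) *
        Polynomial.C (∏ i ∈ Finset.Icc r N, Zv N i ^ k i)
      = Polynomial.C ((Nat.multinomial (Finset.Icc r N) k : R N) *
          ∏ i ∈ Finset.Icc r N, Zv N i ^ k i) by
      rw [map_mul, map_natCast]]
    rw [Polynomial.coeff_C_mul, Polynomial.coeff_X_pow]
    split_ifs with h1 h2 h2
    · rw [mul_one]
    · omega
    · omega
    · rw [mul_zero]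
  rw [Finset.sum_congr rfl key, Finset.sum_ite, Finset.sum_const_zero, add_zero]
  exact bij_sum' N n r j hj

/- STATEMENT 2: if `p + q > j` then
`f_{pqr}^{(j)} = − Σ_{Λ_r^j} ((n+1)!/(d_1!⋯d_l!)) z_{i_1}^{d_1}⋯z_{i_l}^{d_l}`. -/
theorem stmt2 (n N : ℕ) (hn : 1 ≤ n) (p q r j : ℕ)
    (hp : p ≤ N) (hq : q ≤ N) (hr : r ≤ N) (hj : j ≤ N) (h : p + q > j) :
    fpqr N n p q r j = -∑ d ∈ LamR n r j, zTerm N d := by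
  rw [fpqr, Polynomial.coeff_sub, xy_coeff_zero' N p q j h, z_coeff' N n r j hj, zero_sub]

end
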